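/- Identify the plane with ℂ. Let p ∈ ℂ and r ∈ ℝ with 0 < r < |p|, set α = arcsin(r / |p|), and define the normal vectors N₁ = e^{i(α − π/2)} · p and N₂ = e^{i(π/2 − α)} · p (i.e., the rotations of R(α)p by −π/2 and of R(−α)p by +π/2, respectively). Then for every v ∈ ℂ with v ≠ 0: there exists λ ≥ 0 with |λ v − p| ≤ r if and only if Re(conj(N₁) · v) ≥ 0 and Re(conj(N₂) · v) ≥ 0. -/

import Mathlib

open Complex

set_option maxHeartbeats 1000000


private lemma stmt9_auxA (x y sa ca : ℝ) (hsp : 0 < sa)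
    (hc1 : 0 ≤ sa * x - ca * y) (hc2 : 0 ≤ sa * x + ca * y) : 0 ≤ x := by
  nlinarith

private lemma stmt9_auxB (x y V R r S sa ca : ℝ) (hp0 : 0 < R)
    (hRs : R * sa = r) (hSd : S = R * ca) (hS2 : S ^ 2 = R ^ 2 - r ^ 2)
    (key : x ^ 2 + y ^ 2 = R ^ 2 * V) (hv2 : 0 < V)
    (hc1 : 0 ≤ sa * x - ca * y) (hc2 : 0 ≤ sa * x + ca * y) : y ^ 2 ≤ r ^ 2 * V := by
  have hprod : 0 ≤ (sa * x - ca * y) * (sa * x + ca * y) := mul_nonneg hc1 hc2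
  have h3 : S ^ 2 * y ^ 2 ≤ r ^ 2 * x ^ 2 := by
    subst hSd
    rw [← hRs]
    nlinarith [mul_nonneg (mul_pos hp0 hp0).le hprod]
  nlinarith [h3, hS2, key, hv2, mul_pos hp0 hp0]

/-- The collision cone as the intersection of two half-planes: in the plane `ℂ`, with
`0 < r < |p|`, `α = arcsin (r/|p|)`, and normal vectors `N₁ = e^{i(α - π/2)} p`,
`N₂ = e^{i(π/2 - α)} p`, a nonzero velocity `v` generates a ray from the origin that
meets the closed disk of radius `r` about `p` iff `Re(conj N₁ · v) ≥ 0` and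
`Re(conj N₂ · v) ≥ 0`. -/
theorem stmt9 (p : ℂ) (r : ℝ) (hr : 0 < r) (hrp : r < ‖p‖)
    (α : ℝ) (hα : α = Real.arcsin (r / ‖p‖))
    (N₁ N₂ : ℂ)
    (hN₁ : N₁ = Complex.exp ((α - Real.pi / 2 : ℝ) * Complex.I) * p)
    (hN₂ : N₂ = Complex.exp ((Real.pi / 2 - α : ℝ) * Complex.I) * p)
    (v : ℂ) (hv : v ≠ 0) :
    (∃ l : ℝ, 0 ≤ l ∧ ‖(l : ℂ) * v - p‖ ≤ r) ↔
      0 ≤ ((starRingEnd ℂ) N₁ * v).re ∧ 0 ≤ ((starRingEnd ℂ) N₂ * v).re := by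
  have hp0 : (0:ℝ) < ‖p‖ := hr.trans hrp
  have hv2 : 0 < Complex.normSq v := Complex.normSq_pos.mpr hv
  set R : ℝ := ‖p‖ with hRdef
  set x : ℝ := ((starRingEnd ℂ) p * v).re with hxdef
  set y : ℝ := ((starRingEnd ℂ) p * v).im with hydef
  set V : ℝ := Complex.normSq v with hVdef
  have hnp : Complex.normSq p = R^2 := by rw [hRdef]; exact (Complex.sq_norm p).symm
  have key : x^2 + y^2 = R^2 * V := by
    rw [← hnp, hxdef, hydef, hVdef]
    simp [Complex.normSq_apply, Complex.mul_re, Complex.mul_im]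
    ring
  have hnorm : ∀ l : ℝ, Complex.normSq ((l:ℂ)*v - p) = l^2 * V - 2*l*x + R^2 := by
    intro l
    rw [← hnp, hxdef, hVdef]
    simp [Complex.normSq_apply, Complex.mul_re, Complex.mul_im, Complex.sub_re, Complex.sub_im]
    ring
  -- trigonometry
  have hmem1 : (0:ℝ) < r / R := div_pos hr hp0
  have hmem2 : r / R < 1 := (div_lt_one hp0).mpr hrp
  have hsin : Real.sin α = r / R := by
    rw [hα, Real.sin_arcsin (by linarith) hmem2.le]
  have hsinpos : 0 < Real.sin α := by rw [hsin]; exact hmem1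
  have hαpos : 0 < α := by rw [hα]; exact Real.arcsin_pos.mpr hmem1
  have hαlt : α < Real.pi / 2 := by rw [hα]; exact Real.arcsin_lt_pi_div_two.mpr hmem2
  have hcos : 0 < Real.cos α :=
    Real.cos_pos_of_mem_Ioo ⟨by linarith [Real.pi_pos], hαlt⟩
  have hpyth : Real.sin α ^ 2 + Real.cos α ^ 2 = 1 := Real.sin_sq_add_cos_sq α
  have hRsin : R * Real.sin α = r := by rw [hsin]; field_simp [hp0.ne']
  set S : ℝ := R * Real.cos α with hSdef
  have hSpos : 0 < S := mul_pos hp0 hcos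
  have hS2 : S^2 = R^2 - r^2 := by
    rw [hSdef, ← hRsin]
    linear_combination (R^2) * hpyth
  -- the two half-plane conditions in coordinates
  have h1 : ((starRingEnd ℂ) N₁ * v).re = Real.sin α * x - Real.cos α * y := by
    rw [hN₁, Complex.exp_mul_I, ← Complex.ofReal_cos, ← Complex.ofReal_sin, hxdef, hydef]
    simp [Complex.mul_re, Complex.mul_im, Real.cos_sub, Real.sin_sub,
      Real.cos_pi_div_two, Real.sin_pi_div_two, Complex.sin_ofReal_re, Complex.cos_ofReal_re]
    ring
  have h2 : ((starRingEnd ℂ) N₂ * v).re = Real.sin α * x + Real.cos α * y := by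
    rw [hN₂, Complex.exp_mul_I, ← Complex.ofReal_cos, ← Complex.ofReal_sin, hxdef, hydef]
    simp [Complex.mul_re, Complex.mul_im, Real.cos_sub, Real.sin_sub,
      Real.cos_pi_div_two, Real.sin_pi_div_two, Complex.sin_ofReal_re, Complex.cos_ofReal_re]
    ring
  rw [h1, h2]
  constructor
  · rintro ⟨l, hl, hab⟩
    have hsq : l^2 * V - 2*l*x + R^2 ≤ r^2 := by
      rw [← hnorm l, ← Complex.sq_norm]
      exact pow_le_pow_left₀ (norm_nonneg _) hab 2
    have hx0 : 0 ≤ x := by nlinarith [mul_nonneg hl hl, hv2]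
    have hl0 : 0 < l := by
      rcases hl.lt_or_eq with h | h
      · exact h
      · exfalso; rw [← h] at hsq; nlinarith
    have hx2 : V * (R^2 - r^2) ≤ x^2 := by
      have c0 : 0 < R^2 - r^2 := by nlinarith
      have h2' : l^2*V + (R^2 - r^2) ≤ 2*l*x := by linarith
      have hL : 0 ≤ l^2*V + (R^2 - r^2) := by positivity
      have hsq2 : (l^2*V + (R^2 - r^2)) * (l^2*V + (R^2 - r^2)) ≤ (2*l*x) * (2*l*x) :=
        mul_le_mul h2' h2' hL (by linarith)
      nlinarith [hsq2, sq_nonneg (l^2*V - (R^2 - r^2)), mul_pos hl0 hl0]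
    have hy2 : y^2 ≤ r^2 * V := by nlinarith [key, hx2]
    have hrx : 0 ≤ r * x := mul_nonneg hr.le hx0
    have hsqs : S^2 * y^2 ≤ r^2 * x^2 := by nlinarith [hS2, key, hy2, hv2]
    have hcone1 : 0 ≤ r * x - S * y := by
      nlinarith [hrx, hsqs, sq_nonneg (r*x - S*y), sq_nonneg (r*x + S*y)]
    have hcone2 : 0 ≤ r * x + S * y := by
      nlinarith [hrx, hsqs, sq_nonneg (r*x - S*y), sq_nonneg (r*x + S*y)]
    constructor
    · have heq : R * (Real.sin α * x - Real.cos α * y) = r*x - S*y := by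
        rw [← hRsin, hSdef]; ring
      have h' : R * 0 ≤ R * (Real.sin α * x - Real.cos α * y) := by
        rw [heq, mul_zero]; exact hcone1
      exact le_of_mul_le_mul_left h' hp0
    · have heq : R * (Real.sin α * x + Real.cos α * y) = r*x + S*y := by
        rw [← hRsin, hSdef]; ring
      have h' : R * 0 ≤ R * (Real.sin α * x + Real.cos α * y) := by
        rw [heq, mul_zero]; exact hcone2
      exact le_of_mul_le_mul_left h' hp0
  · rintro ⟨hc1, hc2⟩
    have hx0 : 0 ≤ x := stmt9_auxA x y _ _ hsinpos hc1 hc2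
    have hy2 : y^2 ≤ r^2 * V :=
      stmt9_auxB x y V R r S _ _ hp0 hRsin hSdef hS2 key hv2 hc1 hc2
    refine ⟨x / V, div_nonneg hx0 hv2.le, ?_⟩
    have hns : Complex.normSq ((x / V : ℝ) * v - p) ≤ r^2 := by
      rw [hnorm (x / V)]
      have hx2' : (R^2 - r^2) * V ≤ x^2 := by nlinarith [key, hy2]
      have hdiv : (R^2 - r^2) ≤ x^2 / V := (le_div_iff₀ hv2).mpr hx2'
      have hrw : (x/V)^2 * V - 2*(x/V)*x = -(x^2/V) := by field_simp; ring
      linarith [hrw, hdiv]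
    calc ‖(x / V : ℝ) * v - p‖ = Real.sqrt (Complex.normSq ((x / V : ℝ) * v - p)) :=
          Complex.norm_def _
      _ ≤ Real.sqrt (r^2) := Real.sqrt_le_sqrt hns
      _ = r := Real.sqrt_sq hr.le
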